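/- Let a, b, c ∈ ℝ with c not equal to any nonpositive integer and 2 − c not equal to any nonpositive integer. Define G : (0,1) → ℝ by G(x) = x^{1−c} · F(a−c+1, b−c+1; 2−c; x), where F(a',b';c';x) = Σ_{n≥0} ((a')_n (b')_n / ((c')_n n!)) x^n and (x)_n is the rising factorial. Then for every x ∈ (0,1), G satisfies the hypergeometric differential equation x(1−x)·G''(x) + (c − (a+b+1)x)·G'(x) − a·b·G(x) = 0. -/

import Mathlib

open Filter Real


noncomputable def hypCoeff (a' b' c' : ℝ) (n : ℕ) : ℝ :=
  (ascPochhammer ℝ n).eval a' * (ascPochhammer ℝ n).eval b' /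
    ((ascPochhammer ℝ n).eval c' * (n.factorial : ℝ))

lemma poch_succ (t : ℝ) (n : ℕ) :
    (ascPochhammer ℝ (n+1)).eval t = (ascPochhammer ℝ n).eval t * (t + n) := by
  simp [ascPochhammer_succ_right, Polynomial.eval_mul]

lemma poch_ne {c' : ℝ} (h : ∀ k : ℕ, c' ≠ -(k : ℝ)) (n : ℕ) :
    (ascPochhammer ℝ n).eval c' ≠ 0 := by
  induction n with
  | zero => simp
  | succ n ih =>
    rw [poch_succ]
    refine mul_ne_zero ih ?_
    intro hzero
    exact h n (by linarith [hzero])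

lemma hypCoeff_succ {a' b' c' : ℝ} (h : ∀ k : ℕ, c' ≠ -(k : ℝ)) (n : ℕ) :
    hypCoeff a' b' c' (n+1) = hypCoeff a' b' c' n *
      ((a' + n) * (b' + n)) / ((c' + n) * (n + 1)) := by
  have hc : (ascPochhammer ℝ n).eval c' ≠ 0 := poch_ne h n
  have hcn : c' + (n:ℝ) ≠ 0 := by
    intro hz; exact h n (by linarith)
  have hf : (n.factorial : ℝ) ≠ 0 := Nat.cast_ne_zero.2 n.factorial_ne_zero
  have hn1 : ((n:ℝ) + 1) ≠ 0 := by positivity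
  simp only [hypCoeff, poch_succ, Nat.factorial_succ, Nat.cast_mul, Nat.cast_add, Nat.cast_one]
  field_simp

lemma tendsto_quot (p q : ℝ) :
    Tendsto (fun n : ℕ => (p + n) / (q + n)) atTop (nhds 1) := by
  have hq : Tendsto (fun n : ℕ => q + (n:ℝ)) atTop atTop :=
    tendsto_atTop_add_const_left _ q tendsto_natCast_atTop_atTop
  have h0 : Tendsto (fun n : ℕ => (p - q) / (q + (n:ℝ))) atTop (nhds 0) :=
    Tendsto.div_atTop tendsto_const_nhds hq
  have heq : ∀ᶠ n : ℕ in atTop, 1 + (p - q) / (q + (n:ℝ)) = (p + n) / (q + n) := by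
    filter_upwards [hq.eventually_gt_atTop 0] with n hn
    field_simp; ring
  have h1 : Tendsto (fun n : ℕ => 1 + (p - q) / (q + (n:ℝ))) atTop (nhds (1 + 0)) :=
    tendsto_const_nhds.add h0
  simpa using Tendsto.congr' heq h1

lemma master_summable {a' b' c' : ℝ} (h : ∀ k : ℕ, c' ≠ -(k : ℝ)) {M r : ℝ}
    (hM : 1 ≤ M) (hr0 : 0 ≤ r) (hr1 : r < 1) :
    Summable (fun n : ℕ => |hypCoeff a' b' c' n| * ((n : ℝ) + M) ^ 2 * r ^ n) := by
  set f : ℕ → ℝ := fun n => |hypCoeff a' b' c' n| * ((n : ℝ) + M) ^ 2 * r ^ n with hf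
  set q : ℝ := (1 + r) / 2 with hqdef
  have hq1 : q < 1 := by rw [hqdef]; linarith
  have hrq : r < q := by rw [hqdef]; linarith
  -- the ratio function
  set L : ℕ → ℝ := fun n => |a' + n| * |b' + n| / (|c' + n| * (n + 1)) *
      (((M + 1) + n) / (M + n)) ^ 2 * r with hL
  have hLtendsto : Tendsto L atTop (nhds r) := by
    have h1 : Tendsto (fun n : ℕ => (a' + n) / (c' + n)) atTop (nhds 1) := tendsto_quot a' c'
    have h2 : Tendsto (fun n : ℕ => (b' + n) / (1 + n)) atTop (nhds 1) := tendsto_quot b' 1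
    have h3 : Tendsto (fun n : ℕ => ((M + 1 + n) / (M + n))) atTop (nhds 1) := tendsto_quot (M+1) M
    have h1' : Tendsto (fun n : ℕ => |(a' + n) / (c' + n)|) atTop (nhds 1) := by
      simpa using h1.abs
    have h2' : Tendsto (fun n : ℕ => |(b' + n) / (1 + n)|) atTop (nhds 1) := by
      simpa using h2.abs
    have h3' : Tendsto (fun n : ℕ => ((M + 1 + n) / (M + n)) ^ 2) atTop (nhds 1) := by
      simpa using h3.pow 2
    have := ((h1'.mul h2').mul h3').mul (tendsto_const_nhds (x := r))
    simp only [one_mul] at this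
    refine this.congr fun n => ?_
    have hn1' : (0:ℝ) < 1 + (n:ℝ) := by positivity
    have e1 : |(1:ℝ)+(n:ℝ)| = (n:ℝ)+1 := by rw [abs_of_pos hn1'] ; ring
    rw [hL]
    simp only
    rw [abs_div, abs_div, div_mul_div_comm, e1]
  have hev : ∀ᶠ n : ℕ in atTop, L n ≤ q := hLtendsto.eventually_le_const hrq
  refine summable_of_ratio_norm_eventually_le hq1 ?_
  filter_upwards [hev] with n hn
  have hMn : (0:ℝ) < (n:ℝ) + M := by positivity
  have hn1 : (0:ℝ) < (n:ℝ) + 1 := by positivity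
  have hcn : c' + (n:ℝ) ≠ 0 := fun hz => h n (by linarith)
  have hfn : 0 ≤ f n := by positivity
  have key : f (n + 1) = L n * f n := by
    have hrec := hypCoeff_succ (a':=a') (b':=b') h n
    rw [hf]
    simp only
    rw [hrec]
    push_cast
    rw [abs_div, abs_mul, abs_mul, abs_mul]
    rw [hL]
    simp only
    rw [abs_of_pos hn1]
    have habs : |c' + (n:ℝ)| ≠ 0 := abs_ne_zero.2 hcn
    field_simp
    ring
  rw [Real.norm_eq_abs, Real.norm_eq_abs, key, abs_mul]
  have hLn : 0 ≤ L n := by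
    rw [hL]; positivity
  rw [abs_of_nonneg hLn, abs_of_nonneg hfn]
  exact mul_le_mul_of_nonneg_right hn hfn
noncomputable def hypG0 (a' b' c' s : ℝ) (n : ℕ) (x : ℝ) : ℝ :=
  hypCoeff a' b' c' n * x ^ ((n:ℝ) + s)

noncomputable def hypG1 (a' b' c' s : ℝ) (n : ℕ) (x : ℝ) : ℝ :=
  hypCoeff a' b' c' n * (((n:ℝ) + s) * x ^ ((n:ℝ) + s - 1))

noncomputable def hypG2 (a' b' c' s : ℝ) (n : ℕ) (x : ℝ) : ℝ :=
  hypCoeff a' b' c' n * (((n:ℝ) + s) * (((n:ℝ) + s - 1) * x ^ ((n:ℝ) + s - 2)))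

noncomputable def hypA (a' b' c' s : ℝ) (n : ℕ) (x : ℝ) : ℝ :=
  hypCoeff a' b' c' n * ((n:ℝ) * (((n:ℝ) + s) * x ^ ((n:ℝ) + s - 1)))

lemma hasDerivAt_hypG0 (a' b' c' s : ℝ) (n : ℕ) {x : ℝ} (hx : x ≠ 0) :
    HasDerivAt (fun y => hypG0 a' b' c' s n y) (hypG1 a' b' c' s n x) x := by
  have h := (Real.hasDerivAt_rpow_const (p := (n:ℝ) + s) (Or.inl hx)).const_mul
    (hypCoeff a' b' c' n)
  simpa [hypG0, hypG1] using h

lemma hasDerivAt_hypG1 (a' b' c' s : ℝ) (n : ℕ) {x : ℝ} (hx : x ≠ 0) :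
    HasDerivAt (fun y => hypG1 a' b' c' s n y) (hypG2 a' b' c' s n x) x := by
  have h := ((Real.hasDerivAt_rpow_const (p := (n:ℝ) + s - 1) (Or.inl hx)).const_mul
    ((n:ℝ) + s)).const_mul (hypCoeff a' b' c' n)
  have he : (n:ℝ) + s - 1 - 1 = (n:ℝ) + s - 2 := by ring
  rw [he] at h
  simpa [hypG1, hypG2, mul_assoc] using h

lemma rpow_le_bound {δ ρ x e B : ℝ} (hδ : 0 < δ) (hx1 : δ ≤ x) (hx2 : x ≤ ρ) (hρ : ρ ≤ 1)
    (hB : δ ^ e ≤ B) (hB1 : 1 ≤ B) (n : ℕ) : x ^ ((n:ℝ) + e) ≤ ρ ^ n * B := by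
  have hx0 : 0 < x := lt_of_lt_of_le hδ hx1
  rw [Real.rpow_add hx0, Real.rpow_natCast]
  have h1 : x ^ (n:ℕ) ≤ ρ ^ n := pow_le_pow_left₀ hx0.le hx2 n
  have h2 : x ^ e ≤ B := by
    rcases le_or_gt 0 e with he | he
    · exact le_trans (Real.rpow_le_one hx0.le (le_trans hx2 hρ) he) hB1
    · exact le_trans (Real.rpow_le_rpow_of_nonpos hδ hx1 he.le) hB
  have hρ0 : 0 ≤ ρ := le_trans hδ.le (le_trans hx1 hx2)
  exact mul_le_mul h1 h2 (Real.rpow_nonneg hx0.le e) (pow_nonneg hρ0 n)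
section Bounds

variable {a' b' c' s δ ρ M B : ℝ} {y : ℝ} {n : ℕ}

lemma hyp_bounds (hδ : 0 < δ) (hρ : ρ ≤ 1) (hy1 : δ ≤ y) (hy2 : y ≤ ρ)
    (hM : |s| + 2 ≤ M) (hB0 : δ ^ s ≤ B) (hB1 : δ ^ (s-1) ≤ B) (hB2 : δ ^ (s-2) ≤ B)
    (hB : 1 ≤ B) (n : ℕ) :
    |hypG0 a' b' c' s n y| ≤ |hypCoeff a' b' c' n| * ((n:ℝ)+M)^2 * ρ^n * B ∧
    |hypG1 a' b' c' s n y| ≤ |hypCoeff a' b' c' n| * ((n:ℝ)+M)^2 * ρ^n * B ∧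
    |hypG2 a' b' c' s n y| ≤ |hypCoeff a' b' c' n| * ((n:ℝ)+M)^2 * ρ^n * B ∧
    |hypA a' b' c' s n y| ≤ |hypCoeff a' b' c' n| * ((n:ℝ)+M)^2 * ρ^n * B := by
  have hρ0 : 0 < ρ := lt_of_lt_of_le hδ (le_trans hy1 hy2)
  have hy0 : 0 < y := lt_of_lt_of_le hδ hy1
  have habs : (0:ℝ) ≤ |s| := abs_nonneg s
  have hnM : (1:ℝ) ≤ (n:ℝ) + M := by
    have : (0:ℝ) ≤ (n:ℝ) := Nat.cast_nonneg n
    linarith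
  have hnM0 : (0:ℝ) ≤ (n:ℝ) + M := by linarith
  have hRB : (0:ℝ) ≤ ρ^n * B := by positivity
  have hu : (0:ℝ) ≤ |hypCoeff a' b' c' n| := abs_nonneg _
  have e0 : y ^ ((n:ℝ) + s) ≤ ρ^n * B := rpow_le_bound hδ hy1 hy2 hρ hB0 hB n
  have e1 : y ^ ((n:ℝ) + s - 1) ≤ ρ^n * B := by
    have := rpow_le_bound (e := s - 1) hδ hy1 hy2 hρ hB1 hB n
    rwa [show (n:ℝ) + (s-1) = (n:ℝ) + s - 1 by ring] at this
  have e2 : y ^ ((n:ℝ) + s - 2) ≤ ρ^n * B := by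
    have := rpow_le_bound (e := s - 2) hδ hy1 hy2 hρ hB2 hB n
    rwa [show (n:ℝ) + (s-2) = (n:ℝ) + s - 2 by ring] at this
  have p0 : (0:ℝ) ≤ y ^ ((n:ℝ) + s) := Real.rpow_nonneg hy0.le _
  have p1 : (0:ℝ) ≤ y ^ ((n:ℝ) + s - 1) := Real.rpow_nonneg hy0.le _
  have p2 : (0:ℝ) ≤ y ^ ((n:ℝ) + s - 2) := Real.rpow_nonneg hy0.le _
  have hs1 : |(n:ℝ) + s| ≤ (n:ℝ) + M := by
    calc |(n:ℝ) + s| ≤ |(n:ℝ)| + |s| := abs_add_le _ _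
    _ ≤ (n:ℝ) + M := by rw [abs_of_nonneg (Nat.cast_nonneg n : (0:ℝ) ≤ n)]; linarith
  have hs2 : |(n:ℝ) + s - 1| ≤ (n:ℝ) + M := by
    calc |(n:ℝ) + s - 1| ≤ |(n:ℝ) + s| + |(-1 : ℝ)| := by
          rw [sub_eq_add_neg]; exact abs_add_le _ _
    _ ≤ (n:ℝ) + M := by
          rw [abs_neg, abs_one]
          calc |(n:ℝ) + s| + 1 ≤ |(n:ℝ)| + |s| + 1 := by linarith [abs_add_le (n:ℝ) s]
          _ ≤ (n:ℝ) + M := by rw [abs_of_nonneg (Nat.cast_nonneg n : (0:ℝ) ≤ n)]; linarith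
  have hn' : |(n:ℝ)| ≤ (n:ℝ) + M := by
    rw [abs_of_nonneg (Nat.cast_nonneg n : (0:ℝ) ≤ n)]; linarith
  refine ⟨?_, ?_, ?_, ?_⟩
  · rw [hypG0, abs_mul, abs_of_nonneg p0]
    calc |hypCoeff a' b' c' n| * y ^ ((n:ℝ)+s)
        ≤ |hypCoeff a' b' c' n| * (ρ^n * B) := mul_le_mul_of_nonneg_left e0 hu
      _ ≤ |hypCoeff a' b' c' n| * (((n:ℝ)+M)^2 * (ρ^n * B)) := by
          refine mul_le_mul_of_nonneg_left ?_ hu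
          nlinarith [mul_nonneg (mul_nonneg (sub_nonneg.2 hnM) (by linarith : (0:ℝ) ≤ (n:ℝ)+M+1)) hRB]
      _ = |hypCoeff a' b' c' n| * ((n:ℝ)+M)^2 * ρ^n * B := by ring
  · rw [hypG1, abs_mul, abs_mul, abs_of_nonneg p1]
    calc |hypCoeff a' b' c' n| * (|(n:ℝ)+s| * y ^ ((n:ℝ)+s-1))
        ≤ |hypCoeff a' b' c' n| * (((n:ℝ)+M) * (ρ^n * B)) :=
          mul_le_mul_of_nonneg_left (mul_le_mul hs1 e1 p1 hnM0) hu
      _ ≤ |hypCoeff a' b' c' n| * (((n:ℝ)+M)^2 * (ρ^n * B)) := by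
          refine mul_le_mul_of_nonneg_left (mul_le_mul_of_nonneg_right ?_ hRB) hu
          nlinarith [mul_nonneg hnM0 (sub_nonneg.2 hnM)]
      _ = |hypCoeff a' b' c' n| * ((n:ℝ)+M)^2 * ρ^n * B := by ring
  · rw [hypG2, abs_mul, abs_mul, abs_mul, abs_of_nonneg p2]
    calc |hypCoeff a' b' c' n| * (|(n:ℝ)+s| * (|(n:ℝ)+s-1| * y ^ ((n:ℝ)+s-2)))
        ≤ |hypCoeff a' b' c' n| * (((n:ℝ)+M) * (((n:ℝ)+M) * (ρ^n * B))) := by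
          refine mul_le_mul_of_nonneg_left (mul_le_mul hs1 ?_ (by positivity) hnM0) hu
          exact mul_le_mul hs2 e2 p2 hnM0
      _ = |hypCoeff a' b' c' n| * ((n:ℝ)+M)^2 * ρ^n * B := by ring
  · rw [hypA, abs_mul, abs_mul, abs_mul, abs_of_nonneg p1]
    calc |hypCoeff a' b' c' n| * (|(n:ℝ)| * (|(n:ℝ)+s| * y ^ ((n:ℝ)+s-1)))
        ≤ |hypCoeff a' b' c' n| * (((n:ℝ)+M) * (((n:ℝ)+M) * (ρ^n * B))) := by
          refine mul_le_mul_of_nonneg_left (mul_le_mul hn' ?_ (by positivity) hnM0) hu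
          exact mul_le_mul hs1 e1 p1 hnM0
      _ = |hypCoeff a' b' c' n| * ((n:ℝ)+M)^2 * ρ^n * B := by ring
end Bounds

theorem second_hypergeometric_solution_satisfies_ode (a b c : ℝ)
    (hc : ∀ k : ℕ, c ≠ -(k : ℝ)) (hc' : ∀ k : ℕ, 2 - c ≠ -(k : ℝ)) (G : ℝ → ℝ)
    (hG : ∀ x ∈ Set.Ioo (0 : ℝ) 1, G x = x ^ (1 - c) * ∑' n : ℕ,
      (ascPochhammer ℝ n).eval (a - c + 1) * (ascPochhammer ℝ n).eval (b - c + 1) /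
        ((ascPochhammer ℝ n).eval (2 - c) * (n.factorial : ℝ)) * x ^ n) :
    ∀ x ∈ Set.Ioo (0 : ℝ) 1,
      x * (1 - x) * deriv (deriv G) x + (c - (a + b + 1) * x) * deriv G x
        - a * b * G x = 0 := by
  have hGeq : ∀ y ∈ Set.Ioo (0:ℝ) 1,
      G y = ∑' n : ℕ, hypG0 (a-c+1) (b-c+1) (2-c) (1-c) n y := by
    intro y hy
    rw [hG y hy, ← tsum_mul_left]
    refine tsum_congr fun n => ?_
    have hy0 : (0:ℝ) < y := hy.1
    simp only [hypG0, hypCoeff]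
    rw [Real.rpow_add hy0, Real.rpow_natCast]
    ring
  have key : ∀ x ∈ Set.Ioo (0:ℝ) 1,
      Summable (fun n => hypG0 (a-c+1) (b-c+1) (2-c) (1-c) n x) ∧
      Summable (fun n => hypG1 (a-c+1) (b-c+1) (2-c) (1-c) n x) ∧
      Summable (fun n => hypG2 (a-c+1) (b-c+1) (2-c) (1-c) n x) ∧
      Summable (fun n => hypA (a-c+1) (b-c+1) (2-c) (1-c) n x) ∧
      HasDerivAt (fun z => ∑' n : ℕ, hypG0 (a-c+1) (b-c+1) (2-c) (1-c) n z)
        (∑' n : ℕ, hypG1 (a-c+1) (b-c+1) (2-c) (1-c) n x) x ∧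
      HasDerivAt (fun z => ∑' n : ℕ, hypG1 (a-c+1) (b-c+1) (2-c) (1-c) n z)
        (∑' n : ℕ, hypG2 (a-c+1) (b-c+1) (2-c) (1-c) n x) x := by
    intro x hx
    obtain ⟨hx0, hx1⟩ := hx
    set δ : ℝ := x/2 with hδdef
    set ρ : ℝ := (1+x)/2 with hρdef
    have hδ : 0 < δ := by rw [hδdef]; linarith
    have hρ1 : ρ < 1 := by rw [hρdef]; linarith
    have hρ0 : 0 ≤ ρ := by rw [hρdef]; linarith
    set M : ℝ := |1-c| + 2 with hMdef
    have hM : 1 ≤ M := by have := abs_nonneg (1-c); rw [hMdef]; linarith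
    have hMs : |1-c| + 2 ≤ M := le_of_eq hMdef.symm
    set B : ℝ := max (max (max (δ ^ (1-c)) (δ ^ (1-c-1))) (δ ^ (1-c-2))) 1 with hBdef
    have hB : 1 ≤ B := le_max_right _ _
    have hB0 : δ ^ (1-c) ≤ B :=
      le_trans (le_trans (le_max_left _ _) (le_max_left _ _)) (le_max_left _ _)
    have hB1 : δ ^ (1-c-1) ≤ B :=
      le_trans (le_trans (le_max_right _ _) (le_max_left _ _)) (le_max_left _ _)
    have hB2 : δ ^ (1-c-2) ≤ B := le_trans (le_max_right _ _) (le_max_left _ _)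
    have hw : Summable (fun n : ℕ =>
        |hypCoeff (a-c+1) (b-c+1) (2-c) n| * ((n:ℝ)+M)^2 * ρ^n * B) :=
      (master_summable (a' := a-c+1) (b' := b-c+1) hc' hM hρ0 hρ1).mul_right B
    have hb : ∀ (n : ℕ) (y : ℝ), y ∈ Set.Ioo δ ρ →
        |hypG0 (a-c+1) (b-c+1) (2-c) (1-c) n y| ≤
          |hypCoeff (a-c+1) (b-c+1) (2-c) n| * ((n:ℝ)+M)^2 * ρ^n * B ∧
        |hypG1 (a-c+1) (b-c+1) (2-c) (1-c) n y| ≤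
          |hypCoeff (a-c+1) (b-c+1) (2-c) n| * ((n:ℝ)+M)^2 * ρ^n * B ∧
        |hypG2 (a-c+1) (b-c+1) (2-c) (1-c) n y| ≤
          |hypCoeff (a-c+1) (b-c+1) (2-c) n| * ((n:ℝ)+M)^2 * ρ^n * B ∧
        |hypA (a-c+1) (b-c+1) (2-c) (1-c) n y| ≤
          |hypCoeff (a-c+1) (b-c+1) (2-c) n| * ((n:ℝ)+M)^2 * ρ^n * B :=
      fun n y hy => hyp_bounds hδ hρ1.le hy.1.le hy.2.le hMs hB0 hB1 hB2 hB n
    have hxmem : x ∈ Set.Ioo δ ρ := ⟨by rw [hδdef]; linarith, by rw [hρdef]; linarith⟩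
    have hs0 : Summable (fun n => hypG0 (a-c+1) (b-c+1) (2-c) (1-c) n x) :=
      Summable.of_norm_bounded hw fun n => by
        rw [Real.norm_eq_abs]; exact (hb n x hxmem).1
    have hs1 : Summable (fun n => hypG1 (a-c+1) (b-c+1) (2-c) (1-c) n x) :=
      Summable.of_norm_bounded hw fun n => by
        rw [Real.norm_eq_abs]; exact (hb n x hxmem).2.1
    have hs2 : Summable (fun n => hypG2 (a-c+1) (b-c+1) (2-c) (1-c) n x) :=
      Summable.of_norm_bounded hw fun n => by
        rw [Real.norm_eq_abs]; exact (hb n x hxmem).2.2.1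
    have hsA : Summable (fun n => hypA (a-c+1) (b-c+1) (2-c) (1-c) n x) :=
      Summable.of_norm_bounded hw fun n => by
        rw [Real.norm_eq_abs]; exact (hb n x hxmem).2.2.2
    refine ⟨hs0, hs1, hs2, hsA, ?_, ?_⟩
    · exact hasDerivAt_tsum_of_isPreconnected hw isOpen_Ioo isPreconnected_Ioo
        (fun n y hy => hasDerivAt_hypG0 _ _ _ _ n (ne_of_gt (lt_trans hδ hy.1)))
        (fun n y hy => by rw [Real.norm_eq_abs]; exact (hb n y hy).2.1)
        hxmem hs0 hxmem
    · exact hasDerivAt_tsum_of_isPreconnected hw isOpen_Ioo isPreconnected_Ioo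
        (fun n y hy => hasDerivAt_hypG1 _ _ _ _ n (ne_of_gt (lt_trans hδ hy.1)))
        (fun n y hy => by rw [Real.norm_eq_abs]; exact (hb n y hy).2.2.1)
        hxmem hs1 hxmem
  have hder1 : ∀ x ∈ Set.Ioo (0:ℝ) 1,
      deriv G x = ∑' n : ℕ, hypG1 (a-c+1) (b-c+1) (2-c) (1-c) n x := by
    intro x hx
    have hev : G =ᶠ[nhds x] (fun z => ∑' n : ℕ, hypG0 (a-c+1) (b-c+1) (2-c) (1-c) n z) := by
      filter_upwards [isOpen_Ioo.mem_nhds hx] with y hy using hGeq y hy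
    rw [hev.deriv_eq]
    exact ((key x hx).2.2.2.2.1).deriv
  have hder2 : ∀ x ∈ Set.Ioo (0:ℝ) 1,
      deriv (deriv G) x = ∑' n : ℕ, hypG2 (a-c+1) (b-c+1) (2-c) (1-c) n x := by
    intro x hx
    have hev : deriv G =ᶠ[nhds x]
        (fun z => ∑' n : ℕ, hypG1 (a-c+1) (b-c+1) (2-c) (1-c) n z) := by
      filter_upwards [isOpen_Ioo.mem_nhds hx] with y hy using hder1 y hy
    rw [hev.deriv_eq]
    exact ((key x hx).2.2.2.2.2).deriv
  intro x hx
  obtain ⟨hs0, hs1, hs2, hsA, -, -⟩ := key x hx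
  have hx0 : (0:ℝ) < x := hx.1
  rw [hder1 x hx, hder2 x hx, hGeq x hx]
  rw [← tsum_mul_left, ← tsum_mul_left, ← tsum_mul_left,
    ← (hs2.mul_left _).tsum_add (hs1.mul_left _),
    ← ((hs2.mul_left _).add (hs1.mul_left _)).tsum_sub (hs0.mul_left _)]
  have hterm : ∀ n : ℕ,
      x * (1 - x) * hypG2 (a-c+1) (b-c+1) (2-c) (1-c) n x
        + (c - (a + b + 1) * x) * hypG1 (a-c+1) (b-c+1) (2-c) (1-c) n x
        - a * b * hypG0 (a-c+1) (b-c+1) (2-c) (1-c) n x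
      = hypA (a-c+1) (b-c+1) (2-c) (1-c) n x
        - hypA (a-c+1) (b-c+1) (2-c) (1-c) (n+1) x := by
    intro n
    have hne1 : (2 - c) + (n:ℝ) ≠ 0 := fun hz => hc' n (by linarith)
    have hne2 : (n:ℝ) + 1 ≠ 0 := by positivity
    have hA1 : hypA (a-c+1) (b-c+1) (2-c) (1-c) (n+1) x
        = hypCoeff (a-c+1) (b-c+1) (2-c) n * (((a-c+1)+n) * ((b-c+1)+n))
            * x ^ ((n:ℝ) + (1-c)) := by
      simp only [hypA, hypCoeff_succ (a' := a-c+1) (b' := b-c+1) hc' n]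
      push_cast
      rw [show ((n:ℝ) + 1 + (1-c) - 1) = (n:ℝ) + (1-c) from by ring]
      field_simp
      ring
    have h1 : x ^ ((n:ℝ)+(1-c)-1) = x ^ ((n:ℝ)+(1-c)-2) * x := by
      rw [show (n:ℝ)+(1-c)-1 = ((n:ℝ)+(1-c)-2)+1 from by ring, Real.rpow_add_one hx0.ne']
    have h2 : x ^ ((n:ℝ)+(1-c)) = x ^ ((n:ℝ)+(1-c)-2) * x * x := by
      rw [← Real.rpow_add_one hx0.ne', ← Real.rpow_add_one hx0.ne']
      congr 1
      ring
    rw [hA1]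
    simp only [hypG0, hypG1, hypG2, hypA]
    rw [h1, h2]
    ring
  rw [tsum_congr hterm,
    hsA.tsum_sub ((summable_nat_add_iff 1).2 hsA),
    hsA.tsum_eq_zero_add]
  have hA0 : hypA (a-c+1) (b-c+1) (2-c) (1-c) 0 x = 0 := by simp [hypA]
  rw [hA0]
  ring
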